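/- arXiv:1603.07153 — 3 statements merged into one kernel-verified Lean document; each statement's English description precedes it below -/
import Mathlib

section
/- Let w : ℝ² → ℝ be a nonzero harmonic polynomial that is homogeneous of degree k ≥ 2. Then the Hessian determinant w_{xx} w_{yy} - w_{xy}² is strictly negative at every point of ℝ² ∖ {(0,0)}. -/
open Real

/-- Partial derivative in the first variable. -/
noncomputable def pdx (w : ℝ → ℝ → ℝ) (x y : ℝ) : ℝ := deriv (fun x' => w x' y) x

/-- Partial derivative in the second variable. -/
noncomputable def pdy (w : ℝ → ℝ → ℝ) (x y : ℝ) : ℝ := deriv (fun y' => w x y') y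

/-- `w` is (the function of) a real polynomial in two variables. -/
def IsPoly2 (w : ℝ → ℝ → ℝ) : Prop :=
  ∃ p : MvPolynomial (Fin 2) ℝ, ∀ x y : ℝ, w x y = MvPolynomial.eval ![x, y] p

/-- `w` is homogeneous of degree `k` as a function. -/
def Homog (w : ℝ → ℝ → ℝ) (k : ℕ) : Prop :=
  ∀ l x y : ℝ, w (l * x) (l * y) = l ^ k * w x y

namespace Stmt1Aux

open MvPolynomial

lemma pderiv_comm' {σ : Type*} [DecidableEq σ] (i j : σ) (p : MvPolynomial σ ℝ) :
    pderiv i (pderiv j p) = pderiv j (pderiv i p) := by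
  induction p using MvPolynomial.induction_on with
  | C a => simp
  | add q r hq hr => simp [hq, hr]
  | mul_X q n hq =>
      have k1 : pderiv i (pderiv j (X n : MvPolynomial σ ℝ)) = 0 := by
        rcases eq_or_ne j n with rfl | h
        · simp [pderiv_X_self]
        · simp [pderiv_X_of_ne h.symm]
      have k2 : pderiv j (pderiv i (X n : MvPolynomial σ ℝ)) = 0 := by
        rcases eq_or_ne i n with rfl | h
        · simp [pderiv_X_self]
        · simp [pderiv_X_of_ne h.symm]
      simp only [pderiv_mul, map_add, hq, k1, k2, mul_zero, add_zero]
      ring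

lemma hasFDerivAt_eval (q : MvPolynomial (Fin 2) ℝ) (z : ℂ) :
    HasFDerivAt (fun z : ℂ => eval ![z.re, z.im] q)
      ((eval ![z.re, z.im] (pderiv 0 q)) • Complex.reCLM
        + (eval ![z.re, z.im] (pderiv 1 q)) • Complex.imCLM) z := by
  induction q using MvPolynomial.induction_on with
  | C a =>
      simp only [pderiv_C, eval_C, map_zero, zero_smul, add_zero, eval_zero]
      simpa using hasFDerivAt_const a z
  | add q r hq hr =>
      simp only [map_add, eval_add]
      refine (hq.add hr).congr_fderiv ?_
      ext w
      simp [add_smul]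
      ring
  | mul_X q n hq =>
      fin_cases n
      · simp only [eval_mul, eval_X, Matrix.cons_val_zero]
        refine (hq.mul (Complex.reCLM.hasFDerivAt (x := z))).congr_fderiv ?_
        ext w
        have h0 : pderiv (0 : Fin 2) (X (0:Fin 2) : MvPolynomial (Fin 2) ℝ) = 1 :=
          pderiv_X_self 0
        have h1 : pderiv (1 : Fin 2) (X (0:Fin 2) : MvPolynomial (Fin 2) ℝ) = 0 :=
          pderiv_X_of_ne (by decide)
        simp [pderiv_mul, h0, h1]
        ring
      · simp only [eval_mul, eval_X, Matrix.cons_val_one, Matrix.head_cons]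
        refine (hq.mul (Complex.imCLM.hasFDerivAt (x := z))).congr_fderiv ?_
        ext w
        have h0 : pderiv (0 : Fin 2) (X (1:Fin 2) : MvPolynomial (Fin 2) ℝ) = 0 :=
          pderiv_X_of_ne (by decide)
        have h1 : pderiv (1 : Fin 2) (X (1:Fin 2) : MvPolynomial (Fin 2) ℝ) = 1 :=
          pderiv_X_self 1
        simp [pderiv_mul, h0, h1]
        ring

lemma hasDerivAt_eval_x (q : MvPolynomial (Fin 2) ℝ) (x y : ℝ) :
    HasDerivAt (fun x' => eval ![x', y] q) (eval ![x, y] (pderiv 0 q)) x := by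
  have hc : HasDerivAt (fun t : ℝ => (t : ℂ) + (y : ℂ) * Complex.I) 1 x := by
    simpa using (Complex.ofRealCLM.hasDerivAt (x := x)).add_const ((y:ℂ) * Complex.I)
  have h := (hasFDerivAt_eval q ((x:ℂ) + (y:ℂ)*Complex.I)).comp_hasDerivAt x hc
  simp only [Complex.add_re, Complex.ofReal_re, Complex.mul_re, Complex.I_re,
    Complex.I_im, Complex.ofReal_im, Complex.add_im, Complex.mul_im] at h
  refine (h.congr_deriv ?_).congr_of_eventuallyEq (Filter.Eventually.of_forall fun t => ?_) <;> simp

lemma hasDerivAt_eval_y (q : MvPolynomial (Fin 2) ℝ) (x y : ℝ) :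
    HasDerivAt (fun y' => eval ![x, y'] q) (eval ![x, y] (pderiv 1 q)) y := by
  have hc : HasDerivAt (fun t : ℝ => (x : ℂ) + (t : ℂ) * Complex.I) Complex.I y := by
    have := ((Complex.ofRealCLM.hasDerivAt (x := y)).mul_const Complex.I).const_add (x:ℂ)
    simpa using this
  have h := (hasFDerivAt_eval q ((x:ℂ) + (y:ℂ)*Complex.I)).comp_hasDerivAt y hc
  simp only [Complex.add_re, Complex.ofReal_re, Complex.mul_re, Complex.I_re,
    Complex.I_im, Complex.ofReal_im, Complex.add_im, Complex.mul_im] at h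
  refine (h.congr_deriv ?_).congr_of_eventuallyEq (Filter.Eventually.of_forall fun t => ?_) <;> simp

lemma homog_pd0 (q : MvPolynomial (Fin 2) ℝ) (m : ℕ)
    (h : ∀ l x y : ℝ, l ≠ 0 → eval ![l*x, l*y] q = l^(m+1) * eval ![x,y] q)
    (l x y : ℝ) (hl : l ≠ 0) :
    eval ![l*x, l*y] (pderiv 0 q) = l^m * eval ![x,y] (pderiv 0 q) := by
  have hf : HasDerivAt (fun t : ℝ => l * t) l x := by
    simpa using (hasDerivAt_id x).const_mul l
  have h1 : HasDerivAt (fun t : ℝ => eval ![l*t, l*y] q)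
      (eval ![l*x, l*y] (pderiv 0 q) * l) x :=
    (hasDerivAt_eval_x q (l*x) (l*y)).comp x hf
  have h3 : (fun t : ℝ => eval ![l*t, l*y] q) = fun t => l^(m+1) * eval ![t, y] q := by
    funext t; exact h l t y hl
  rw [h3] at h1
  have h2 : HasDerivAt (fun t : ℝ => l^(m+1) * eval ![t, y] q)
      (l^(m+1) * eval ![x, y] (pderiv 0 q)) x := (hasDerivAt_eval_x q x y).const_mul _
  have h4 := h1.unique h2
  exact mul_right_cancel₀ hl (h4.trans (by rw [pow_succ]; ring))

lemma homog_pd1 (q : MvPolynomial (Fin 2) ℝ) (m : ℕ)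
    (h : ∀ l x y : ℝ, l ≠ 0 → eval ![l*x, l*y] q = l^(m+1) * eval ![x,y] q)
    (l x y : ℝ) (hl : l ≠ 0) :
    eval ![l*x, l*y] (pderiv 1 q) = l^m * eval ![x,y] (pderiv 1 q) := by
  have hf : HasDerivAt (fun t : ℝ => l * t) l y := by
    simpa using (hasDerivAt_id y).const_mul l
  have h1 : HasDerivAt (fun t : ℝ => eval ![l*x, l*t] q)
      (eval ![l*x, l*y] (pderiv 1 q) * l) y :=
    (hasDerivAt_eval_y q (l*x) (l*y)).comp y hf
  have h3 : (fun t : ℝ => eval ![l*x, l*t] q) = fun t => l^(m+1) * eval ![x, t] q := by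
    funext t; exact h l x t hl
  rw [h3] at h1
  have h2 : HasDerivAt (fun t : ℝ => l^(m+1) * eval ![x, t] q)
      (l^(m+1) * eval ![x, y] (pderiv 1 q)) y := (hasDerivAt_eval_y q x y).const_mul _
  have h4 := h1.unique h2
  exact mul_right_cancel₀ hl (h4.trans (by rw [pow_succ]; ring))

lemma euler (q : MvPolynomial (Fin 2) ℝ) (m : ℕ)
    (h : ∀ l x y : ℝ, l ≠ 0 → eval ![l*x, l*y] q = l^m * eval ![x,y] q)
    (x y : ℝ) :
    x * eval ![x,y] (pderiv 0 q) + y * eval ![x,y] (pderiv 1 q) = m * eval ![x,y] q := by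
  have hre : HasDerivAt (fun l : ℝ => (l:ℂ)) 1 1 := by
    simpa using (hasDerivAt_id (1:ℝ)).ofReal_comp
  have ha : HasDerivAt (fun l : ℝ => ((l*x : ℝ) : ℂ)) (x:ℂ) 1 := by
    have := hre.mul_const (x:ℂ)
    simpa [Complex.ofReal_mul] using this
  have hb : HasDerivAt (fun l : ℝ => ((l*y : ℝ) : ℂ) * Complex.I)
      ((y:ℂ) * Complex.I) 1 := by
    have := (hre.mul_const (y:ℂ)).mul_const Complex.I
    simpa [Complex.ofReal_mul] using this
  have hz : HasDerivAt (fun l : ℝ => ((l*x : ℝ) : ℂ) + ((l*y : ℝ) : ℂ) * Complex.I)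
      ((x:ℂ) + (y:ℂ)*Complex.I) 1 := ha.add hb
  have h1 := (hasFDerivAt_eval q (((1*x : ℝ) : ℂ) + ((1*y : ℝ) : ℂ) * Complex.I)).comp_hasDerivAt 1 hz
  simp only [Complex.add_re, Complex.ofReal_re, Complex.mul_re, Complex.I_re,
    Complex.I_im, Complex.ofReal_im, Complex.add_im, Complex.mul_im,
    mul_zero, mul_one, zero_mul, sub_zero, zero_add, add_zero, one_mul,
    ContinuousLinearMap.add_apply, ContinuousLinearMap.coe_smul', Pi.smul_apply,
    Complex.reCLM_apply, Complex.imCLM_apply, smul_eq_mul] at h1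
  have h2 : HasDerivAt (fun l : ℝ => l^m * eval ![x, y] q) (m * eval ![x,y] q) 1 := by
    simpa using (hasDerivAt_pow m (1:ℝ)).mul_const (eval ![x,y] q)
  have heq : (fun l : ℝ => eval ![l*x, l*y] q)
      =ᶠ[nhds (1:ℝ)] (fun l : ℝ => l^m * eval ![x,y] q) := by
    filter_upwards [eventually_ne_nhds (one_ne_zero (α := ℝ))] with l hl
    exact h l x y hl
  have hfun : ((fun z : ℂ => eval ![z.re, z.im] q) ∘
      fun l : ℝ => ((l*x:ℝ):ℂ) + ((l*y:ℝ):ℂ)*Complex.I)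
      = fun l : ℝ => eval ![l*x, l*y] q := by
    funext l
    simp [Function.comp]
  rw [hfun] at h1
  have h1' := h1.congr_of_eventuallyEq heq.symm
  have := h1'.unique h2
  rw [← this]; ring

lemma key_vanish (u v : MvPolynomial (Fin 2) ℝ) (m : ℕ)
    (hCR1 : pderiv 0 u = - pderiv 1 v)
    (hCR2 : pderiv 1 u = pderiv 0 v)
    (hu : ∀ l x y : ℝ, l ≠ 0 → eval ![l*x, l*y] u = l^m * eval ![x,y] u)
    (hv : ∀ l x y : ℝ, l ≠ 0 → eval ![l*x, l*y] v = l^m * eval ![x,y] v)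
    (x₀ y₀ : ℝ) (hxy : ¬(x₀ = 0 ∧ y₀ = 0))
    (h0u : eval ![x₀, y₀] u = 0) (h0v : eval ![x₀, y₀] v = 0) :
    ∀ x y : ℝ, eval ![x,y] u = 0 ∧ eval ![x,y] v = 0 := by
  set A : ℂ → ℝ := fun z => eval ![z.re, z.im] u with hA_def
  set B : ℂ → ℝ := fun z => eval ![z.re, z.im] v with hB_def
  set f : ℂ → ℂ := fun z => ((A z : ℝ) : ℂ) + (-(B z)) • Complex.I with hf_def
  have hdiff : Differentiable ℂ f := by
    intro z
    have hA := hasFDerivAt_eval u z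
    have hB := hasFDerivAt_eval v z
    have h1 := Complex.ofRealCLM.hasFDerivAt.comp z hA
    have h2 := (hB.neg).smul_const Complex.I
    have hf : HasFDerivAt f
        (Complex.ofRealCLM.comp
            ((eval ![z.re, z.im] (pderiv 0 u)) • Complex.reCLM
              + (eval ![z.re, z.im] (pderiv 1 u)) • Complex.imCLM)
          + (-((eval ![z.re, z.im] (pderiv 0 v)) • Complex.reCLM
              + (eval ![z.re, z.im] (pderiv 1 v)) • Complex.imCLM)).smulRight Complex.I) z :=
      h1.add h2
    set c : ℂ := ((eval ![z.re, z.im] (pderiv 0 u) : ℝ) : ℂ)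
      - ((eval ![z.re, z.im] (pderiv 0 v) : ℝ) : ℂ) * Complex.I with hc_def
    have hb1 : eval ![z.re, z.im] (pderiv 1 v) = - eval ![z.re, z.im] (pderiv 0 u) := by
      rw [hCR1]; simp
    have ha1 : eval ![z.re, z.im] (pderiv 1 u) = eval ![z.re, z.im] (pderiv 0 v) := by
      rw [hCR2]
    have hlin : (ContinuousLinearMap.smulRight (1 : ℂ →L[ℂ] ℂ) c).restrictScalars ℝ
        = Complex.ofRealCLM.comp
            ((eval ![z.re, z.im] (pderiv 0 u)) • Complex.reCLM
              + (eval ![z.re, z.im] (pderiv 1 u)) • Complex.imCLM)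
          + (-((eval ![z.re, z.im] (pderiv 0 v)) • Complex.reCLM
              + (eval ![z.re, z.im] (pderiv 1 v)) • Complex.imCLM)).smulRight Complex.I := by
      ext w
      simp only [ContinuousLinearMap.coe_restrictScalars', ContinuousLinearMap.smulRight_apply,
        ContinuousLinearMap.one_apply, ContinuousLinearMap.add_apply,
        ContinuousLinearMap.coe_comp', Function.comp_apply, ContinuousLinearMap.coe_smul',
        Pi.smul_apply, Complex.reCLM_apply, Complex.imCLM_apply, smul_eq_mul,
        ContinuousLinearMap.neg_apply, hc_def, hb1, ha1]
      apply Complex.ext <;>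
        simp [Complex.add_re, Complex.add_im, Complex.mul_re, Complex.mul_im] <;> ring
    exact (hasFDerivAt_of_restrictScalars ℝ hf hlin).differentiableAt
  have hanal : AnalyticOnNhd ℂ f Set.univ :=
    Complex.analyticOnNhd_univ_iff_differentiable.mpr hdiff
  set z₀ : ℂ := ((x₀ : ℝ) : ℂ) + ((y₀ : ℝ) : ℂ) * Complex.I with hz₀_def
  have hz₀re : z₀.re = x₀ := by simp [hz₀_def]
  have hz₀im : z₀.im = y₀ := by simp [hz₀_def]
  have hz₀ : z₀ ≠ 0 := by
    simp only [ne_eq, Complex.ext_iff, Complex.zero_re, Complex.zero_im, hz₀re, hz₀im]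
    tauto
  have hray : ∀ l : ℝ, l ≠ 0 → f (l • z₀) = 0 := by
    intro l hl
    have hre : (l • z₀).re = l * x₀ := by simp [Complex.smul_re, hz₀re]
    have him : (l • z₀).im = l * y₀ := by simp [Complex.smul_im, hz₀im]
    have hAz : A (l • z₀) = 0 := by
      simp only [hA_def, hre, him]
      rw [hu l x₀ y₀ hl, h0u, mul_zero]
    have hBz : B (l • z₀) = 0 := by
      simp only [hB_def, hre, him]
      rw [hv l x₀ y₀ hl, h0v, mul_zero]
    simp [hf_def, ← Complex.real_smul, hAz, hBz]
  have hfreq : ∃ᶠ z in nhdsWithin z₀ {z₀}ᶜ, f z = 0 := by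
    have hseq : ∀ n : ℕ, (1 + 1/((n:ℝ)+1)) ≠ 0 := by
      intro n; positivity
    have htend : Filter.Tendsto (fun n : ℕ => (1 + 1/((n:ℝ)+1)) • z₀)
        Filter.atTop (nhdsWithin z₀ {z₀}ᶜ) := by
      rw [tendsto_nhdsWithin_iff]
      constructor
      · have h0 : Filter.Tendsto (fun n : ℕ => (1 + 1/((n:ℝ)+1))) Filter.atTop (nhds 1) := by
          have := tendsto_one_div_add_atTop_nhds_zero_nat (𝕜 := ℝ)
          simpa using Filter.Tendsto.const_add (1:ℝ) this
        have := h0.smul_const z₀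
        simpa using this
      · refine Filter.Eventually.of_forall fun n => ?_
        simp only [Set.mem_compl_iff, Set.mem_singleton_iff]
        intro hn
        have h' : ((1 + 1/((n:ℝ)+1)) - 1) • z₀ = 0 := by
          rw [sub_smul, one_smul, hn, sub_self]
        rcases smul_eq_zero.mp h' with h'' | h''
        · have hpos : (0:ℝ) < 1/((n:ℝ)+1) := by positivity
          simp only [add_sub_cancel_left] at h''
          linarith [h'']
        · exact hz₀ h''
    exact htend.frequently (Filter.Eventually.of_forall fun n => hray _ (hseq n)).frequently
  have hEq : Set.EqOn f 0 Set.univ :=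
    hanal.eqOn_zero_of_preconnected_of_frequently_eq_zero isPreconnected_univ
      (Set.mem_univ z₀) hfreq
  intro x y
  have hz := hEq (Set.mem_univ (((x : ℝ) : ℂ) + ((y : ℝ) : ℂ) * Complex.I))
  simp only [hf_def, Pi.zero_apply, Complex.ext_iff, Complex.add_re, Complex.add_im,
    Complex.ofReal_re, Complex.ofReal_im, Complex.zero_re, Complex.zero_im,
    Complex.real_smul, Complex.mul_re, Complex.mul_im, Complex.I_re, Complex.I_im,
    Complex.ofReal_neg, Complex.neg_re, Complex.neg_im] at hz
  have hre : (((x : ℝ) : ℂ) + ((y : ℝ) : ℂ) * Complex.I).re = x := by simp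
  have him : (((x : ℝ) : ℂ) + ((y : ℝ) : ℂ) * Complex.I).im = y := by simp
  constructor
  · have := hz.1
    simpa [hA_def, hre, him] using this
  · have := hz.2
    simp only [hA_def, hB_def, hre, him] at this ⊢
    linarith [this]

end Stmt1Aux

open MvPolynomial Stmt1Aux in
theorem stmt_1 (w : ℝ → ℝ → ℝ) (k : ℕ) (hk : 2 ≤ k)
    (hpoly : IsPoly2 w) (hhom : Homog w k)
    (hne : ∃ x y : ℝ, w x y ≠ 0)
    (hharm : ∀ x y : ℝ, pdx (pdx w) x y + pdy (pdy w) x y = 0) :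
    ∀ x y : ℝ, (x, y) ≠ (0, 0) →
      pdx (pdx w) x y * pdy (pdy w) x y - (pdy (pdx w) x y) ^ 2 < 0 := by
  obtain ⟨p, hp⟩ := hpoly
  obtain ⟨m, rfl⟩ : ∃ m, k = m + 2 := ⟨k - 2, by omega⟩
  -- first partials
  have hwx : ∀ x y : ℝ, pdx w x y = eval ![x, y] (pderiv 0 p) := by
    intro x y
    have hfun : (fun x' => w x' y) = fun x' => eval ![x', y] p := funext fun t => hp t y
    rw [pdx, hfun]
    exact (hasDerivAt_eval_x p x y).deriv
  have hwy : ∀ x y : ℝ, pdy w x y = eval ![x, y] (pderiv 1 p) := by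
    intro x y
    have hfun : (fun y' => w x y') = fun y' => eval ![x, y'] p := funext fun t => hp x t
    rw [pdy, hfun]
    exact (hasDerivAt_eval_y p x y).deriv
  -- second partials
  have hxx : ∀ x y : ℝ, pdx (pdx w) x y = eval ![x, y] (pderiv 0 (pderiv 0 p)) := by
    intro x y
    have hfun : (fun x' => pdx w x' y) = fun x' => eval ![x', y] (pderiv 0 p) :=
      funext fun t => hwx t y
    rw [pdx, hfun]
    exact (hasDerivAt_eval_x (pderiv 0 p) x y).deriv
  have hxy2 : ∀ x y : ℝ, pdy (pdx w) x y = eval ![x, y] (pderiv 1 (pderiv 0 p)) := by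
    intro x y
    have hfun : (fun y' => pdx w x y') = fun y' => eval ![x, y'] (pderiv 0 p) :=
      funext fun t => hwx x t
    rw [pdy, hfun]
    exact (hasDerivAt_eval_y (pderiv 0 p) x y).deriv
  have hyy : ∀ x y : ℝ, pdy (pdy w) x y = eval ![x, y] (pderiv 1 (pderiv 1 p)) := by
    intro x y
    have hfun : (fun y' => pdy w x y') = fun y' => eval ![x, y'] (pderiv 1 p) :=
      funext fun t => hwy x t
    rw [pdy, hfun]
    exact (hasDerivAt_eval_y (pderiv 1 p) x y).deriv
  set u : MvPolynomial (Fin 2) ℝ := pderiv 0 (pderiv 0 p) with hu_def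
  set v : MvPolynomial (Fin 2) ℝ := pderiv 1 (pderiv 0 p) with hv_def
  -- harmonicity as polynomial identity
  have harm_poly : pderiv 0 (pderiv 0 p) + pderiv 1 (pderiv 1 p) = 0 := by
    apply MvPolynomial.funext
    intro s
    have hs : ![s 0, s 1] = s := by
      funext i; fin_cases i <;> rfl
    have h := hharm (s 0) (s 1)
    rw [hxx, hyy] at h
    rw [map_add, map_zero, ← hs]
    exact h
  -- Cauchy–Riemann identities for (u, -v)
  have hu_eq : u = - pderiv 1 (pderiv 1 p) := by
    rw [hu_def]; linear_combination harm_poly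
  have hCR1 : pderiv 0 u = - pderiv 1 v := by
    rw [hu_eq, map_neg]
    rw [pderiv_comm' 0 1 (pderiv 1 p), pderiv_comm' 0 1 p]
  have hCR2 : pderiv 1 u = pderiv 0 v := pderiv_comm' 1 0 (pderiv 0 p)
  -- homogeneity
  have hp_hom : ∀ l x y : ℝ, l ≠ 0 → eval ![l*x, l*y] p = l^(m+2) * eval ![x,y] p := by
    intro l x y _
    rw [← hp, ← hp, hhom]
  have h1hom : ∀ l x y : ℝ, l ≠ 0 →
      eval ![l*x, l*y] (pderiv 0 p) = l^(m+1) * eval ![x,y] (pderiv 0 p) :=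
    fun l x y hl => homog_pd0 p (m+1) hp_hom l x y hl
  have h2hom : ∀ l x y : ℝ, l ≠ 0 →
      eval ![l*x, l*y] (pderiv 1 p) = l^(m+1) * eval ![x,y] (pderiv 1 p) :=
    fun l x y hl => homog_pd1 p (m+1) hp_hom l x y hl
  have huhom : ∀ l x y : ℝ, l ≠ 0 → eval ![l*x, l*y] u = l^m * eval ![x,y] u :=
    fun l x y hl => homog_pd0 (pderiv 0 p) m h1hom l x y hl
  have hvhom : ∀ l x y : ℝ, l ≠ 0 → eval ![l*x, l*y] v = l^m * eval ![x,y] v :=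
    fun l x y hl => homog_pd1 (pderiv 0 p) m h1hom l x y hl
  intro x y hxy0
  have hxy' : ¬(x = 0 ∧ y = 0) := by
    intro ⟨hx, hy⟩
    exact hxy0 (by rw [hx, hy])
  have hyy_eq : pdy (pdy w) x y = - pdx (pdx w) x y := by
    linarith [hharm x y]
  rw [hyy_eq]
  by_cases hab : pdx (pdx w) x y = 0 ∧ pdy (pdx w) x y = 0
  · -- derive contradiction : w ≡ 0
    exfalso
    obtain ⟨ha, hb⟩ := hab
    have h0u : eval ![x, y] u = 0 := by rw [← hxx]; exact ha
    have h0v : eval ![x, y] v = 0 := by rw [← hxy2]; exact hb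
    have hvan := key_vanish u v m hCR1 hCR2 huhom hvhom x y hxy' h0u h0v
    -- first derivatives vanish identically
    have hp1_zero : ∀ X Y : ℝ, eval ![X, Y] (pderiv 0 p) = 0 := by
      intro X Y
      have he := euler (pderiv 0 p) (m+1) h1hom X Y
      rw [(hvan X Y).1, (hvan X Y).2] at he
      have hm : ((m:ℝ) + 1) ≠ 0 := by positivity
      have : ((m+1 : ℕ) : ℝ) * eval ![X, Y] (pderiv 0 p) = 0 := by linarith [he]
      rw [mul_eq_zero] at this
      rcases this with h | h
      · exact absurd h (by push_cast; positivity)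
      · exact h
    have hp2_zero : ∀ X Y : ℝ, eval ![X, Y] (pderiv 1 p) = 0 := by
      intro X Y
      have he := euler (pderiv 1 p) (m+1) h2hom X Y
      have e1 : pderiv 0 (pderiv 1 p) = v := pderiv_comm' 0 1 p
      have e2 : pderiv 1 (pderiv 1 p) = -u := by
        rw [hu_eq]; ring
      rw [e1, e2] at he
      rw [(hvan X Y).2] at he
      simp only [map_neg, (hvan X Y).1, neg_zero] at he
      have : ((m+1 : ℕ) : ℝ) * eval ![X, Y] (pderiv 1 p) = 0 := by
        push_cast at he ⊢; linarith [he]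
      rw [mul_eq_zero] at this
      rcases this with h | h
      · exact absurd h (by push_cast; positivity)
      · exact h
    have hw_zero : ∀ X Y : ℝ, w X Y = 0 := by
      intro X Y
      have he := euler p (m+2) hp_hom X Y
      rw [hp1_zero X Y, hp2_zero X Y] at he
      have : ((m+2 : ℕ) : ℝ) * eval ![X, Y] p = 0 := by push_cast at he ⊢; linarith [he]
      rw [mul_eq_zero] at this
      rcases this with h | h
      · exact absurd h (by push_cast; positivity)
      · rw [hp X Y, h]
    obtain ⟨x', y', hne'⟩ := hne
    exact hne' (hw_zero x' y')
  · -- nondegenerate case: strict negativity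
    rw [not_and_or] at hab
    rcases hab with h | h
    · nlinarith [sq_nonneg (pdx (pdx w) x y), sq_nonneg (pdy (pdx w) x y),
        sq_pos_of_ne_zero h]
    · nlinarith [sq_nonneg (pdx (pdx w) x y), sq_nonneg (pdy (pdx w) x y),
        sq_pos_of_ne_zero h]
end

section
/- Let w : ℝ² → ℝ be a homogeneous polynomial of degree k ≥ 2 that has a repeated linear factor, i.e. w = ℓ² q with ℓ a nonzero linear form and q a homogeneous polynomial of degree k - 2. Then there is no ε > 0 such that w_{xx} w_{yy} - w_{xy}² ≤ -ε² (w_{xx} + w_{yy})² holds with strict negativity of the left side on all of ℝ² ∖ {(0,0)}; in fact the Hessian determinant of w vanishes at every nonzero point of the line ℓ = 0. -/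
open Real

open MvPolynomial

lemma hasDerivAt_eval_x (p : MvPolynomial (Fin 2) ℝ) (x y : ℝ) :
    HasDerivAt (fun x' => MvPolynomial.eval ![x', y] p) (MvPolynomial.eval ![x, y] (pderiv 0 p)) x := by
  induction p using MvPolynomial.induction_on with
  | C a => simpa using hasDerivAt_const x a
  | add p q hp hq => simp only [map_add]; exact hp.add hq
  | mul_X p i hp =>
    have hX : HasDerivAt (fun x' : ℝ => MvPolynomial.eval ![x', y] (X i)) (if i = 0 then 1 else 0) x := by
      fin_cases i
      · simpa using (hasDerivAt_id' x)
      · simpa using hasDerivAt_const x y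
    have := hp.mul hX
    simp only [eval_mul, pderiv_mul, map_add, eval_mul] at *
    refine this.congr_deriv ?_
    fin_cases i <;> simp

lemma hasDerivAt_eval_y (p : MvPolynomial (Fin 2) ℝ) (x y : ℝ) :
    HasDerivAt (fun y' => MvPolynomial.eval ![x, y'] p) (MvPolynomial.eval ![x, y] (pderiv 1 p)) y := by
  induction p using MvPolynomial.induction_on with
  | C a => simpa using hasDerivAt_const y a
  | add p q hp hq => simp only [map_add]; exact hp.add hq
  | mul_X p i hp =>
    have hX : HasDerivAt (fun y' : ℝ => MvPolynomial.eval ![x, y'] (X i)) (if i = 1 then 1 else 0) y := by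
      fin_cases i
      · simpa using hasDerivAt_const y x
      · simpa using (hasDerivAt_id' y)
    have := hp.mul hX
    simp only [eval_mul, pderiv_mul, map_add, eval_mul] at *
    refine this.congr_deriv ?_
    fin_cases i <;> simp

lemma pdx_eval {w : ℝ → ℝ → ℝ} {p : MvPolynomial (Fin 2) ℝ}
    (h : ∀ x y : ℝ, w x y = MvPolynomial.eval ![x, y] p) (x y : ℝ) :
    pdx w x y = MvPolynomial.eval ![x, y] (pderiv 0 p) := by
  have : (fun x' => w x' y) = fun x' => MvPolynomial.eval ![x', y] p := funext fun x' => h x' y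
  rw [pdx, this, (hasDerivAt_eval_x p x y).deriv]

lemma pdy_eval {w : ℝ → ℝ → ℝ} {p : MvPolynomial (Fin 2) ℝ}
    (h : ∀ x y : ℝ, w x y = MvPolynomial.eval ![x, y] p) (x y : ℝ) :
    pdy w x y = MvPolynomial.eval ![x, y] (pderiv 1 p) := by
  have : (fun y' => w x y') = fun y' => MvPolynomial.eval ![x, y'] p := funext fun y' => h x y'
  rw [pdy, this, (hasDerivAt_eval_y p x y).deriv]

theorem stmt_15 (w q : ℝ → ℝ → ℝ) (k : ℕ) (hk : 2 ≤ k)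
    (α β : ℝ) (hl : (α, β) ≠ (0, 0))
    (hq : IsPoly2 q) (hqhom : Homog q (k - 2))
    (hw : ∀ x y : ℝ, w x y = (α * x + β * y) ^ 2 * q x y) :
    (∀ x y : ℝ, (x, y) ≠ (0, 0) → α * x + β * y = 0 →
      pdx (pdx w) x y * pdy (pdy w) x y - (pdy (pdx w) x y) ^ 2 = 0) ∧
    ¬ ∃ ε : ℝ, 0 < ε ∧ ∀ x y : ℝ, (x, y) ≠ (0, 0) →
        pdx (pdx w) x y * pdy (pdy w) x y - (pdy (pdx w) x y) ^ 2 < 0 ∧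
        pdx (pdx w) x y * pdy (pdy w) x y - (pdy (pdx w) x y) ^ 2 ≤
          -ε ^ 2 * (pdx (pdx w) x y + pdy (pdy w) x y) ^ 2 := by
  obtain ⟨p, hp⟩ := hq
  set L : MvPolynomial (Fin 2) ℝ := C α * X 0 + C β * X 1 with hLdef
  set P : MvPolynomial (Fin 2) ℝ := L * L * p with hPdef
  have hwP : ∀ x y : ℝ, w x y = MvPolynomial.eval ![x, y] P := by
    intro x y
    rw [hw, hp]
    simp only [hPdef, hLdef, map_add, map_mul, eval_C, eval_X, Matrix.cons_val_zero,
      Matrix.cons_val_one, Matrix.head_cons]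
    ring
  have hdL0 : pderiv 0 L = C α := by simp [hLdef]
  have hdL1 : pderiv 1 L = C β := by simp [hLdef]
  -- first partials of P
  have h0 : pderiv 0 P = C α * L * p + L * C α * p + L * L * pderiv 0 p := by
    simp only [hPdef, pderiv_mul, hdL0]; ring
  have h1 : pderiv 1 P = C β * L * p + L * C β * p + L * L * pderiv 1 p := by
    simp only [hPdef, pderiv_mul, hdL1]; ring
  -- second partials
  have h00 : pderiv 0 (pderiv 0 P) =
      C α * C α * (2 * p) + C α * L * (4 * pderiv 0 p) + L * L * pderiv 0 (pderiv 0 p) := by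
    rw [h0]; simp only [map_add, pderiv_mul, hdL0, pderiv_C]; ring
  have h11 : pderiv 1 (pderiv 1 P) =
      C β * C β * (2 * p) + C β * L * (4 * pderiv 1 p) + L * L * pderiv 1 (pderiv 1 p) := by
    rw [h1]; simp only [map_add, pderiv_mul, hdL1, pderiv_C]; ring
  have h01 : pderiv 1 (pderiv 0 P) =
      C α * C β * (2 * p) + C α * L * (2 * pderiv 1 p) + C β * L * (2 * pderiv 0 p)
        + L * L * pderiv 1 (pderiv 0 p) := by
    rw [h0]; simp only [map_add, pderiv_mul, hdL0, hdL1, pderiv_C]; ring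
  have main : ∀ x y : ℝ, α * x + β * y = 0 →
      pdx (pdx w) x y * pdy (pdy w) x y - (pdy (pdx w) x y) ^ 2 = 0 := by
    intro x y h
    have hL : MvPolynomial.eval ![x, y] L = 0 := by simpa [hLdef] using h
    have e00 : pdx (pdx w) x y = 2 * α ^ 2 * MvPolynomial.eval ![x, y] p := by
      rw [pdx_eval (fun x y => pdx_eval hwP x y) x y, h00]
      simp [hL]; ring
    have e11 : pdy (pdy w) x y = 2 * β ^ 2 * MvPolynomial.eval ![x, y] p := by
      rw [pdy_eval (fun x y => pdy_eval hwP x y) x y, h11]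
      simp [hL]; ring
    have e01 : pdy (pdx w) x y = 2 * α * β * MvPolynomial.eval ![x, y] p := by
      rw [pdy_eval (fun x y => pdx_eval hwP x y) x y, h01]
      simp [hL]; ring
    rw [e00, e11, e01]; ring
  refine ⟨fun x y _ h => main x y h, ?_⟩
  rintro ⟨ε, hε, hall⟩
  have hne : ((β, -α) : ℝ × ℝ) ≠ (0, 0) := by
    intro hcontra
    apply hl
    have h1 : β = 0 := congrArg Prod.fst hcontra
    have h2 : -α = 0 := congrArg Prod.snd hcontra
    simp [h1, neg_eq_zero.mp h2]
  have h0' : α * β + β * (-α) = 0 := by ring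
  have := (hall β (-α) hne).1
  rw [main β (-α) h0'] at this
  exact lt_irrefl 0 this
end

section
/- Let w : ℝ² → ℝ be a nonzero homogeneous polynomial of degree k ≥ 2 all of whose real linear factors are simple (i.e. w = w₀ ∏_{j=1}^l (α_j x + β_j y) with w₀ nonvanishing on ℝ² ∖ {0} and the (α_j, β_j) pairwise non-collinear). Then the three second partial derivatives w_{xx}, w_{xy}, w_{yy} vanish simultaneously only at the origin. -/
open Real

open MvPolynomial in
lemma hasDerivAt_eval_line (p : MvPolynomial (Fin 2) ℝ) (a b c d t : ℝ) :
    HasDerivAt (fun s : ℝ => eval ![a + s * b, c + s * d] p)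
      (b * eval ![a + t * b, c + t * d] (pderiv 0 p)
        + d * eval ![a + t * b, c + t * d] (pderiv 1 p)) t := by
  induction p using MvPolynomial.induction_on with
  | C r =>
    simp only [eval_C, pderiv_C, map_zero, mul_zero, add_zero]
    exact hasDerivAt_const t r
  | add p q hp hq =>
    have := hp.fun_add hq
    simp only [map_add, eval_add] at this ⊢
    exact this.congr_deriv (by ring)
  | mul_X p i hp =>
    have hi : i = 0 ∨ i = 1 := by omega
    rcases hi with rfl | rfl
    · have h2 : HasDerivAt (fun s : ℝ => a + s * b) b t := by
        simpa using ((hasDerivAt_id t).mul_const b).const_add a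
      have := hp.fun_mul h2
      simp only [eval_mul, eval_X, Matrix.cons_val_zero, map_add, pderiv_mul,
        pderiv_X_self, pderiv_X_of_ne (show (0:Fin 2) ≠ 1 by decide), mul_one, mul_zero, map_zero, zero_mul, add_zero,
        eval_add, Fin.isValue] at this ⊢
      exact this.congr_deriv (by ring)
    · have h2 : HasDerivAt (fun s : ℝ => c + s * d) d t := by
        simpa using ((hasDerivAt_id t).mul_const d).const_add c
      have := hp.fun_mul h2
      simp only [eval_mul, eval_X, Matrix.cons_val_one, Matrix.head_cons, Matrix.cons_val_zero, map_add, pderiv_mul,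
        pderiv_X_self, pderiv_X_of_ne (show (1:Fin 2) ≠ 0 by decide), mul_one, mul_zero, map_zero, zero_mul, add_zero,
        eval_add, Fin.isValue] at this ⊢
      exact this.congr_deriv (by ring)

open MvPolynomial in
lemma hasDerivAt_eval_fst (p : MvPolynomial (Fin 2) ℝ) (x y : ℝ) :
    HasDerivAt (fun x' : ℝ => eval ![x', y] p) (eval ![x, y] (pderiv 0 p)) x := by
  simpa using hasDerivAt_eval_line p 0 1 y 0 x

open MvPolynomial in
lemma hasDerivAt_eval_snd (p : MvPolynomial (Fin 2) ℝ) (x y : ℝ) :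
    HasDerivAt (fun y' : ℝ => eval ![x, y'] p) (eval ![x, y] (pderiv 1 p)) y := by
  simpa using hasDerivAt_eval_line p x 0 0 1 y

open MvPolynomial in
lemma euler_aux (p : MvPolynomial (Fin 2) ℝ) (m : ℕ) (x y : ℝ)
    (h : ∀ l : ℝ, l ≠ 0 → eval ![l * x, l * y] p = l ^ m * eval ![x, y] p) :
    x * eval ![x, y] (pderiv 0 p) + y * eval ![x, y] (pderiv 1 p)
      = m * eval ![x, y] p := by
  have h1 : HasDerivAt (fun s : ℝ => eval ![s * x, s * y] p)
      (x * eval ![x, y] (pderiv 0 p) + y * eval ![x, y] (pderiv 1 p)) 1 := by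
    simpa using hasDerivAt_eval_line p 0 x 0 y 1
  have h2 : HasDerivAt (fun s : ℝ => s ^ m * eval ![x, y] p)
      ((m : ℝ) * eval ![x, y] p) 1 := by
    simpa using (hasDerivAt_pow m (1 : ℝ)).mul_const (eval ![x, y] p)
  have heq : (fun s : ℝ => eval ![s * x, s * y] p)
      =ᶠ[nhds 1] (fun s : ℝ => s ^ m * eval ![x, y] p) := by
    filter_upwards [isOpen_ne.mem_nhds (show (1:ℝ) ≠ 0 by norm_num)] with s hs using h s hs
  exact h1.unique (h2.congr_of_eventuallyEq heq)

open MvPolynomial in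
lemma hom_pderiv0 (p : MvPolynomial (Fin 2) ℝ) (k : ℕ) (hk : 1 ≤ k)
    (hh : ∀ l a b : ℝ, eval ![l * a, l * b] p = l ^ k * eval ![a, b] p)
    (l x y : ℝ) (hl : l ≠ 0) :
    eval ![l * x, l * y] (pderiv 0 p) = l ^ (k - 1) * eval ![x, y] (pderiv 0 p) := by
  have h1 : HasDerivAt (fun u : ℝ => eval ![l * u, l * y] p)
      (l * eval ![l * x, l * y] (pderiv 0 p)) x := by
    simpa [mul_comm] using hasDerivAt_eval_line p 0 l (l * y) 0 x
  have h2 : HasDerivAt (fun u : ℝ => l ^ k * eval ![u, y] p)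
      (l ^ k * eval ![x, y] (pderiv 0 p)) x :=
    (hasDerivAt_eval_fst p x y).const_mul _
  have heq : (fun u : ℝ => eval ![l * u, l * y] p) = (fun u : ℝ => l ^ k * eval ![u, y] p) := by
    funext u; exact hh l u y
  rw [heq] at h1
  have := h1.unique h2
  have hkk : l ^ k = l * l ^ (k - 1) := by
    conv_lhs => rw [show k = (k - 1) + 1 by omega]
    ring
  rw [hkk, mul_assoc] at this
  exact mul_left_cancel₀ hl this

open MvPolynomial in
lemma hom_pderiv1 (p : MvPolynomial (Fin 2) ℝ) (k : ℕ) (hk : 1 ≤ k)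
    (hh : ∀ l a b : ℝ, eval ![l * a, l * b] p = l ^ k * eval ![a, b] p)
    (l x y : ℝ) (hl : l ≠ 0) :
    eval ![l * x, l * y] (pderiv 1 p) = l ^ (k - 1) * eval ![x, y] (pderiv 1 p) := by
  have h1 : HasDerivAt (fun u : ℝ => eval ![l * x, l * u] p)
      (l * eval ![l * x, l * y] (pderiv 1 p)) y := by
    simpa [mul_comm] using hasDerivAt_eval_line p (l * x) 0 0 l y
  have h2 : HasDerivAt (fun u : ℝ => l ^ k * eval ![x, u] p)
      (l ^ k * eval ![x, y] (pderiv 1 p)) y :=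
    (hasDerivAt_eval_snd p x y).const_mul _
  have heq : (fun u : ℝ => eval ![l * x, l * u] p) = (fun u : ℝ => l ^ k * eval ![x, u] p) := by
    funext u; exact hh l x u
  rw [heq] at h1
  have := h1.unique h2
  have hkk : l ^ k = l * l ^ (k - 1) := by
    conv_lhs => rw [show k = (k - 1) + 1 by omega]
    ring
  rw [hkk, mul_assoc] at this
  exact mul_left_cancel₀ hl this

open MvPolynomial in
lemma pderiv_comm01 (p : MvPolynomial (Fin 2) ℝ) :
    pderiv 0 (pderiv 1 p) = pderiv 1 (pderiv 0 p) := by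
  induction p using MvPolynomial.induction_on' with
  | monomial s a =>
    simp only [pderiv_monomial]
    rw [tsub_right_comm]
    congr 1
    have h0 : ((s - Finsupp.single 1 1 : (Fin 2) →₀ ℕ)) 0 = s 0 := by
      simp [Finsupp.tsub_apply, Finsupp.single_apply]
    have h1 : ((s - Finsupp.single 0 1 : (Fin 2) →₀ ℕ)) 1 = s 1 := by
      simp [Finsupp.tsub_apply, Finsupp.single_apply]
    rw [h0, h1]; ring
  | add p q hp hq => simp [map_add, hp, hq]

theorem stmt_16 (w : ℝ → ℝ → ℝ) (k : ℕ) (hk : 2 ≤ k)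
    (hpoly : IsPoly2 w) (hhom : Homog w k) (hne : ∃ x y : ℝ, w x y ≠ 0)
    (l : ℕ) (α β : Fin l → ℝ) (w₀ : ℝ → ℝ → ℝ) (d : ℕ)
    (hw₀poly : IsPoly2 w₀) (hw₀hom : Homog w₀ d)
    (hw₀ne : ∀ x y : ℝ, (x, y) ≠ (0, 0) → w₀ x y ≠ 0)
    (hncol : ∀ i j, i ≠ j → α i * β j - α j * β i ≠ 0)
    (hfac : ∀ x y : ℝ, w x y = w₀ x y * ∏ j, (α j * x + β j * y)) :
    ∀ x y : ℝ, (x, y) ≠ (0, 0) →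
      ¬(pdx (pdx w) x y = 0 ∧ pdy (pdx w) x y = 0 ∧ pdy (pdy w) x y = 0) := by
  classical
  intro x y hxy
  rintro ⟨h11, h12, h22⟩
  obtain ⟨p, hp⟩ := hpoly
  set p0 := MvPolynomial.pderiv 0 p with hp0
  set p1 := MvPolynomial.pderiv 1 p with hp1
  -- eval form of homogeneity
  have hhomE : ∀ l a b : ℝ, MvPolynomial.eval ![l * a, l * b] p
      = l ^ k * MvPolynomial.eval ![a, b] p := by
    intro l a b; rw [← hp, ← hp]; exact hhom l a b
  -- first derivatives
  have hpdx : ∀ a b : ℝ, pdx w a b = MvPolynomial.eval ![a, b] p0 := by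
    intro a b
    have : (fun x' : ℝ => w x' b) = fun x' => MvPolynomial.eval ![x', b] p := by
      funext u; exact hp u b
    rw [pdx, this]
    exact (hasDerivAt_eval_fst p a b).deriv
  have hpdy : ∀ a b : ℝ, pdy w a b = MvPolynomial.eval ![a, b] p1 := by
    intro a b
    have : (fun y' : ℝ => w a y') = fun y' => MvPolynomial.eval ![a, y'] p := by
      funext u; exact hp a u
    rw [pdy, this]
    exact (hasDerivAt_eval_snd p a b).deriv
  -- second derivatives
  have h11' : MvPolynomial.eval ![x, y] (MvPolynomial.pderiv 0 p0) = 0 := by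
    rw [← h11, pdx]
    have : (fun x' : ℝ => pdx w x' y) = fun x' => MvPolynomial.eval ![x', y] p0 := by
      funext u; exact hpdx u y
    rw [this]
    exact (hasDerivAt_eval_fst p0 x y).deriv.symm
  have h12' : MvPolynomial.eval ![x, y] (MvPolynomial.pderiv 1 p0) = 0 := by
    rw [← h12, pdy]
    have : (fun y' : ℝ => pdx w x y') = fun y' => MvPolynomial.eval ![x, y'] p0 := by
      funext u; exact hpdx x u
    rw [this]
    exact (hasDerivAt_eval_snd p0 x y).deriv.symm
  have h22' : MvPolynomial.eval ![x, y] (MvPolynomial.pderiv 1 p1) = 0 := by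
    rw [← h22, pdy]
    have : (fun y' : ℝ => pdy w x y') = fun y' => MvPolynomial.eval ![x, y'] p1 := by
      funext u; exact hpdy x u
    rw [this]
    exact (hasDerivAt_eval_snd p1 x y).deriv.symm
  have h21' : MvPolynomial.eval ![x, y] (MvPolynomial.pderiv 0 p1) = 0 := by
    rw [hp1, pderiv_comm01, ← hp0, h12']
  -- gradient vanishes, via Euler on p0 and p1
  have hk1 : (1:ℕ) ≤ k := by omega
  have hgrad0 : MvPolynomial.eval ![x, y] p0 = 0 := by
    have he := euler_aux p0 (k - 1) x y (fun l hl => hom_pderiv0 p k hk1 hhomE l x y hl)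
    rw [h11', h12'] at he
    have hkne : ((k : ℝ) - 1) ≠ 0 := by
      have : (2:ℝ) ≤ (k:ℝ) := by exact_mod_cast hk
      linarith
    have : ((k - 1 : ℕ) : ℝ) = (k : ℝ) - 1 := by
      have : (1:ℕ) ≤ k := hk1
      push_cast [Nat.cast_sub this]; ring
    rw [this] at he
    simp only [mul_zero, add_zero] at he
    exact (mul_eq_zero.mp he.symm).resolve_left hkne
  have hgrad1 : MvPolynomial.eval ![x, y] p1 = 0 := by
    have he := euler_aux p1 (k - 1) x y (fun l hl => hom_pderiv1 p k hk1 hhomE l x y hl)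
    rw [h21', h22'] at he
    have hkne : ((k : ℝ) - 1) ≠ 0 := by
      have : (2:ℝ) ≤ (k:ℝ) := by exact_mod_cast hk
      linarith
    have : ((k - 1 : ℕ) : ℝ) = (k : ℝ) - 1 := by
      push_cast [Nat.cast_sub hk1]; ring
    rw [this] at he
    simp only [mul_zero, add_zero] at he
    exact (mul_eq_zero.mp he.symm).resolve_left hkne
  -- w vanishes at (x,y)
  have hw0 : w x y = 0 := by
    have he := euler_aux p k x y (fun l _ => hhomE l x y)
    rw [← hp0, ← hp1, hgrad0, hgrad1] at he
    simp only [mul_zero, add_zero] at he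
    have hkne : (k : ℝ) ≠ 0 := by positivity
    rw [hp x y]
    exact (mul_eq_zero.mp he.symm).resolve_left hkne
  -- some factor vanishes
  have hw₀xy : w₀ x y ≠ 0 := hw₀ne x y hxy
  have hprod : ∏ j, (α j * x + β j * y) = 0 := by
    have := hfac x y
    rw [hw0] at this
    exact (mul_eq_zero.mp this.symm).resolve_left hw₀xy
  obtain ⟨j, -, hj⟩ := Finset.prod_eq_zero_iff.mp hprod
  -- other factors don't vanish
  have hother : ∀ i : Fin l, i ≠ j → α i * x + β i * y ≠ 0 := by
    intro i hij hi
    have hdet := hncol i j hij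
    have hx0 : x * (α i * β j - α j * β i) = 0 := by linear_combination β j * hi - β i * hj
    have hy0 : y * (α i * β j - α j * β i) = 0 := by linear_combination α i * hj - α j * hi
    have hx : x = 0 := (mul_eq_zero.mp hx0).resolve_right hdet
    have hy : y = 0 := (mul_eq_zero.mp hy0).resolve_right hdet
    exact hxy (by simp [hx, hy])
  -- (α j, β j) ≠ 0
  have hjne : ¬(α j = 0 ∧ β j = 0) := by
    rintro ⟨ha, hb⟩
    obtain ⟨x₁, y₁, hne₁⟩ := hne
    apply hne₁
    rw [hfac x₁ y₁, Finset.prod_eq_zero (Finset.mem_univ j) (by rw [ha, hb]; ring), mul_zero]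
  -- compute the gradient from the factorization
  obtain ⟨q, hq⟩ := hw₀poly
  have hprodne : ∏ m ∈ Finset.univ.erase j, (α m * x + β m * y) ≠ 0 := by
    rw [Finset.prod_ne_zero_iff]
    intro m hm
    exact hother m (Finset.ne_of_mem_erase hm)
  -- pdx computation
  have hfacx : ∀ i : Fin l, HasDerivAt (fun x' : ℝ => α i * x' + β i * y) (α i) x := by
    intro i
    simpa [add_comm] using ((hasDerivAt_id x).const_mul (α i)).add_const (β i * y)
  have hfacy : ∀ i : Fin l, HasDerivAt (fun y' : ℝ => α i * x + β i * y') (β i) y := by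
    intro i
    simpa [add_comm] using ((hasDerivAt_id y).const_mul (β i)).add_const (α i * x)
  have hw₀x : HasDerivAt (fun x' : ℝ => w₀ x' y) (MvPolynomial.eval ![x, y]
      (MvPolynomial.pderiv 0 q)) x := by
    have : (fun x' : ℝ => w₀ x' y) = fun x' => MvPolynomial.eval ![x', y] q := by
      funext u; exact hq u y
    rw [this]; exact hasDerivAt_eval_fst q x y
  have hw₀y : HasDerivAt (fun y' : ℝ => w₀ x y') (MvPolynomial.eval ![x, y]
      (MvPolynomial.pderiv 1 q)) y := by
    have : (fun y' : ℝ => w₀ x y') = fun y' => MvPolynomial.eval ![x, y'] q := by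
      funext u; exact hq x u
    rw [this]; exact hasDerivAt_eval_snd q x y
  have hPx : HasDerivAt (fun x' : ℝ => ∏ i, (α i * x' + β i * y))
      (∑ i, (∏ m ∈ Finset.univ.erase i, (α m * x + β m * y)) • α i) x :=
    HasDerivAt.fun_finsetProd (fun i _ => hfacx i)
  have hPy : HasDerivAt (fun y' : ℝ => ∏ i, (α i * x + β i * y'))
      (∑ i, (∏ m ∈ Finset.univ.erase i, (α m * x + β m * y)) • β i) y :=
    HasDerivAt.fun_finsetProd (fun i _ => hfacy i)
  -- sums simplify to the j term
  have hsum : ∀ γ : Fin l → ℝ, (∑ i, (∏ m ∈ Finset.univ.erase i, (α m * x + β m * y)) • γ i)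
      = (∏ m ∈ Finset.univ.erase j, (α m * x + β m * y)) * γ j := by
    intro γ
    rw [Finset.sum_eq_single j]
    · simp [smul_eq_mul]
    · intro i _ hij
      rw [Finset.prod_eq_zero (Finset.mem_erase.mpr ⟨(Ne.symm hij), Finset.mem_univ j⟩) hj]
      simp
    · intro h; exact absurd (Finset.mem_univ j) h
  have hwx : HasDerivAt (fun x' : ℝ => w x' y)
      (MvPolynomial.eval ![x, y] (MvPolynomial.pderiv 0 q) * (∏ i, (α i * x + β i * y))
        + w₀ x y * (∑ i, (∏ m ∈ Finset.univ.erase i, (α m * x + β m * y)) • α i)) x := by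
    have heq : (fun x' : ℝ => w x' y)
        = fun x' => w₀ x' y * ∏ i, (α i * x' + β i * y) := by
      funext u; exact hfac u y
    rw [heq]
    exact hw₀x.mul hPx
  have hwy : HasDerivAt (fun y' : ℝ => w x y')
      (MvPolynomial.eval ![x, y] (MvPolynomial.pderiv 1 q) * (∏ i, (α i * x + β i * y))
        + w₀ x y * (∑ i, (∏ m ∈ Finset.univ.erase i, (α m * x + β m * y)) • β i)) y := by
    have heq : (fun y' : ℝ => w x y')
        = fun y' => w₀ x y' * ∏ i, (α i * x + β i * y') := by
      funext u; exact hfac x u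
    rw [heq]
    exact hw₀y.mul hPy
  -- but pdx w x y = 0 and pdy w x y = 0
  have hpx0 : pdx w x y = 0 := by rw [hpdx x y, hgrad0]
  have hpy0 : pdy w x y = 0 := by rw [hpdy x y, hgrad1]
  rw [pdx] at hpx0
  rw [pdy] at hpy0
  rw [hwx.deriv] at hpx0
  rw [hwy.deriv] at hpy0
  rw [hprod, mul_zero, zero_add, hsum] at hpx0 hpy0
  have hαj : α j = 0 := by
    have := (mul_eq_zero.mp ((mul_eq_zero.mp hpx0).resolve_left hw₀xy)).resolve_left hprodne
    exact this
  have hβj : β j = 0 := by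
    have := (mul_eq_zero.mp ((mul_eq_zero.mp hpy0).resolve_left hw₀xy)).resolve_left hprodne
    exact this
  exact hjne ⟨hαj, hβj⟩
end
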